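/- Let f : [0,1]³ → {0,1} be measurable and symmetric almost everywhere (invariant under all permutations of its three arguments for almost all triples), and suppose f(y₁,y₂,y₃)·f(y₁,y₂,y₄)·f(y₁,y₃,y₄)·f(y₂,y₃,y₄) = 0 for almost all (y₁,y₂,y₃,y₄) ∈ [0,1]⁴. Then there exists a symmetric measurable g : [0,1]³ → {0,1}, equal to f almost everywhere, such that g(y₁,y₂,y₃)·g(y₁,y₂,y₄)·g(y₁,y₃,y₄)·g(y₂,y₃,y₄) = 0 for ALL pairwise distinct y₁,y₂,y₃,y₄ ∈ [0,1]. -/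

import Mathlib

open MeasureTheory Set Metric Filter Topology ENNReal

namespace Stmt17Aux

lemma pi_restrict_eq (n : ℕ) :
    (Measure.pi fun _ : Fin n => (volume : Measure ℝ).restrict (Set.Icc (0:ℝ) 1)) =
      (volume : Measure (Fin n → ℝ)).restrict (Set.pi Set.univ fun _ => Set.Icc (0:ℝ) 1) := by
  refine Measure.pi_eq fun s hs => ?_
  rw [Measure.restrict_apply (MeasurableSet.univ_pi hs), ← Set.pi_inter_distrib, volume_pi_pi]
  exact Finset.prod_congr rfl fun i _ => (Measure.restrict_apply (hs i)).symm

lemma measurePreserving_compPerm {n : ℕ} (σ : Equiv.Perm (Fin n)) :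
    MeasurePreserving (fun u : Fin n → ℝ => u ∘ σ) volume volume := by
  have hm : Measurable fun u : Fin n → ℝ => u ∘ σ :=
    measurable_pi_lambda _ fun i => measurable_pi_apply _
  refine ⟨hm, ?_⟩
  rw [show (volume : Measure (Fin n → ℝ)) = Measure.pi fun _ => volume from volume_pi]
  refine (Measure.pi_eq (μ := fun _ : Fin n => (volume : Measure ℝ)) fun s hs => ?_).symm
  rw [Measure.map_apply hm (MeasurableSet.univ_pi hs)]
  have hpre : (fun u : Fin n → ℝ => u ∘ σ) ⁻¹' (Set.pi Set.univ s) =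
      Set.pi Set.univ fun j => s (σ.symm j) := by
    ext u
    simp only [Set.mem_preimage, Set.mem_pi, Set.mem_univ, forall_true_left, Function.comp]
    exact ⟨fun h j => by simpa using h (σ.symm j), fun h i => by simpa using h (σ i)⟩
  rw [hpre]
  rw [show Measure.pi (fun _ : Fin n => (volume : Measure ℝ)) = volume from volume_pi.symm,
    volume_pi_pi]
  exact σ.symm.prod_comp fun i => volume (s i)

end Stmt17Aux

open Stmt17Aux

/-- Continuous tetrahedron removal lemma for 3-uniform hypergraphons: an a.e.
symmetric `{0,1}`-valued kernel on `[0,1]³` with almost no tetrahedra can be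
corrected on a null set to a symmetric kernel with no tetrahedra on any four
pairwise distinct points. -/
theorem stmt17 (f : ℝ → ℝ → ℝ → ℝ)
    (hf : Measurable fun p : ℝ × ℝ × ℝ => f p.1 p.2.1 p.2.2)
    (hval : ∀ x y z, f x y z = 0 ∨ f x y z = 1)
    (hsymm : ∀ π : Equiv.Perm (Fin 3),
      ∀ᵐ z ∂(Measure.pi fun _ : Fin 3 => volume.restrict (Set.Icc (0:ℝ) 1)),
        f (z 0) (z 1) (z 2) = f (z (π 0)) (z (π 1)) (z (π 2)))
    (hae : ∀ᵐ y ∂(Measure.pi fun _ : Fin 4 => volume.restrict (Set.Icc (0:ℝ) 1)),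
      f (y 0) (y 1) (y 2) * f (y 0) (y 1) (y 3) * f (y 0) (y 2) (y 3) *
        f (y 1) (y 2) (y 3) = 0) :
    ∃ g : ℝ → ℝ → ℝ → ℝ,
      Measurable (fun p : ℝ × ℝ × ℝ => g p.1 p.2.1 p.2.2) ∧
      (∀ x y z, g x y z = 0 ∨ g x y z = 1) ∧
      (∀ (z : Fin 3 → ℝ) (π : Equiv.Perm (Fin 3)),
        g (z 0) (z 1) (z 2) = g (z (π 0)) (z (π 1)) (z (π 2))) ∧
      (∀ᵐ z ∂(Measure.pi fun _ : Fin 3 => volume.restrict (Set.Icc (0:ℝ) 1)),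
        g (z 0) (z 1) (z 2) = f (z 0) (z 1) (z 2)) ∧
      (∀ y : Fin 4 → ℝ, (∀ i, y i ∈ Set.Icc (0:ℝ) 1) → Function.Injective y →
        g (y 0) (y 1) (y 2) * g (y 0) (y 1) (y 3) * g (y 0) (y 2) (y 3) *
          g (y 1) (y 2) (y 3) = 0) := by
  classical
  set cube : Set (Fin 3 → ℝ) := Set.pi Set.univ (fun _ => Set.Icc (0:ℝ) 1) with hcube_def
  have hcube : MeasurableSet cube := MeasurableSet.univ_pi fun _ => measurableSet_Icc
  set A : Set (Fin 3 → ℝ) := cube ∩ {w | f (w 0) (w 1) (w 2) = 1} with hA_def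
  have hA : MeasurableSet A := by
    refine hcube.inter ?_
    have hm : Measurable fun w : Fin 3 → ℝ => f (w 0) (w 1) (w 2) := by
      have h2 : Measurable fun w : Fin 3 → ℝ => ((w 0, (w 1, w 2)) : ℝ × ℝ × ℝ) :=
        (measurable_pi_apply 0).prodMk
          ((measurable_pi_apply 1).prodMk (measurable_pi_apply 2))
      exact hf.comp h2
    exact hm (measurableSet_singleton 1)
  set good : (Fin 3 → ℝ) → Prop := fun w =>
    ∃ q : ℚ, 0 < q ∧ ∀ r : ℚ, 0 < r → (r:ℝ) ≤ (q:ℝ) →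
      100 * volume (Aᶜ ∩ closedBall w (r:ℝ)) ≤ ENNReal.ofReal ((2*(r:ℝ))^3) with hgood_def
  set g : ℝ → ℝ → ℝ → ℝ := fun x y z => if good ![x,y,z] then 1 else 0 with hg_def
  have hgval : ∀ x y z, g x y z = 0 ∨ g x y z = 1 := by
    intro x y z
    by_cases h : good ![x,y,z]
    · right; simp [hg_def, h]
    · left; simp [hg_def, h]
  have hvol : ∀ (w : Fin 3 → ℝ) (r : ℝ), 0 ≤ r →
      volume (closedBall w r) = ENNReal.ofReal ((2*r)^3) := by
    intro w r hr
    rw [Real.volume_pi_closedBall w hr]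
    norm_num
  -- Measurability of bad-volume function
  have hbadmeas : ∀ r : ℝ, Measurable fun w : Fin 3 → ℝ => volume (Aᶜ ∩ closedBall w r) := by
    intro r
    have hS : MeasurableSet {p : (Fin 3 → ℝ) × (Fin 3 → ℝ) | p.2 ∈ Aᶜ ∧ dist p.2 p.1 ≤ r} := by
      refine (hA.compl.preimage measurable_snd).inter ?_
      exact measurableSet_le (measurable_dist.comp (measurable_snd.prodMk measurable_fst))
        measurable_const
    have hmm := measurable_measure_prodMk_left (ν := (volume : Measure (Fin 3 → ℝ))) hS
    have heq : (fun w : Fin 3 → ℝ => volume (Aᶜ ∩ closedBall w r)) = fun w =>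
        volume (Prod.mk w ⁻¹' {p : (Fin 3 → ℝ) × (Fin 3 → ℝ) | p.2 ∈ Aᶜ ∧ dist p.2 p.1 ≤ r}) := by
      funext w
      rfl
    rw [heq]
    exact hmm
  have hgoodmeas : MeasurableSet {w : Fin 3 → ℝ | good w} := by
    have hrw : {w : Fin 3 → ℝ | good w} = ⋃ q : ℚ, ⋂ r : ℚ,
        {w : Fin 3 → ℝ | 0 < q ∧ (0 < r → (r:ℝ) ≤ (q:ℝ) →
          100 * volume (Aᶜ ∩ closedBall w (r:ℝ)) ≤ ENNReal.ofReal ((2*(r:ℝ))^3))} := by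
      ext w
      simp only [hgood_def, mem_setOf_eq, mem_iUnion, mem_iInter]
      constructor
      · rintro ⟨q, hq, h⟩; exact ⟨q, fun r => ⟨hq, h r⟩⟩
      · rintro ⟨q, h⟩; exact ⟨q, (h 1).1, fun r => (h r).2⟩
    rw [hrw]
    refine MeasurableSet.iUnion fun q => MeasurableSet.iInter fun r => ?_
    by_cases hq : 0 < q
    · by_cases hr : 0 < r
      · by_cases hrq : (r:ℝ) ≤ (q:ℝ)
        · simp only [hq, hr, hrq, true_and, forall_true_left]
          exact measurableSet_le ((hbadmeas _).const_mul _) measurable_const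
        · simp only [hq, hr, hrq, true_and, forall_true_left]
          simp only [IsEmpty.forall_iff, setOf_true]
          exact MeasurableSet.univ
      · simp only [hq, hr, true_and, IsEmpty.forall_iff, setOf_true]
        exact MeasurableSet.univ
    · simp only [hq, false_and, setOf_false]
      exact MeasurableSet.empty
  have hgmeas : Measurable (fun p : ℝ × ℝ × ℝ => g p.1 p.2.1 p.2.2) := by
    have hφ : Measurable fun p : ℝ × ℝ × ℝ => (![p.1, p.2.1, p.2.2] : Fin 3 → ℝ) := by
      refine measurable_pi_lambda _ fun i => ?_
      fin_cases i
      · simpa using measurable_fst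
      · simpa using measurable_snd.fst
      · simpa using measurable_snd.snd
    have : MeasurableSet {p : ℝ × ℝ × ℝ | good ![p.1, p.2.1, p.2.2]} :=
      hφ hgoodmeas
    exact Measurable.ite this measurable_const measurable_const
  -- symmetry of `good` under permutations
  have hperm : ∀ (σ : Equiv.Perm (Fin 3)) (w : Fin 3 → ℝ), good w → good (w ∘ σ) := by
    intro σ w hw
    obtain ⟨q, hq, h⟩ := hw
    refine ⟨q, hq, fun r hr hrq => ?_⟩
    have hr' : (0:ℝ) < r := by exact_mod_cast hr
    set T : (Fin 3 → ℝ) → (Fin 3 → ℝ) := fun u => u ∘ σ with hT_def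
    have hTmp := measurePreserving_compPerm σ
    have hpre : T ⁻¹' (Aᶜ ∩ closedBall (w ∘ σ) (r:ℝ)) =
        (T ⁻¹' Aᶜ) ∩ closedBall w (r:ℝ) := by
      rw [Set.preimage_inter]
      congr 1
      ext u
      simp only [mem_preimage, mem_closedBall, hT_def]
      rw [dist_pi_le_iff hr'.le, dist_pi_le_iff hr'.le]
      exact ⟨fun hh j => by simpa using hh (σ.symm j), fun hh i => hh (σ i)⟩
    have hcubeinv : ∀ u : Fin 3 → ℝ, u ∘ σ ∈ cube ↔ u ∈ cube := by
      intro u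
      simp only [hcube_def, Set.mem_pi, Set.mem_univ, forall_true_left, Function.comp]
      exact ⟨fun hh j => by simpa using hh (σ.symm j), fun hh i => hh (σ i)⟩
    have hAe : T ⁻¹' A =ᵐ[volume] A := by
      have hsymm' := (hsymm σ)
      rw [pi_restrict_eq 3] at hsymm'
      rw [ae_iff] at hsymm'
      rw [Measure.restrict_apply' hcube] at hsymm'
      rw [MeasureTheory.ae_eq_set]
      constructor
      · refine measure_mono_null ?_ hsymm'
        rintro u ⟨huT, huA⟩
        have hu1 : u ∘ σ ∈ A := huT
        have hucube : u ∈ cube := (hcubeinv u).1 hu1.1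
        refine ⟨?_, hucube⟩
        simp only [mem_setOf_eq]
        intro heq
        exact huA ⟨hucube, heq.trans hu1.2⟩
      · refine measure_mono_null ?_ hsymm'
        rintro u ⟨huA, huT⟩
        refine ⟨?_, huA.1⟩
        simp only [mem_setOf_eq]
        intro heq
        refine huT ?_
        show u ∘ σ ∈ A
        exact ⟨(hcubeinv u).2 huA.1, heq.symm.trans huA.2⟩
    have hkey : volume (Aᶜ ∩ closedBall (w ∘ σ) (r:ℝ)) = volume (Aᶜ ∩ closedBall w (r:ℝ)) := by
      rw [← hTmp.measure_preimage ((hA.compl.inter measurableSet_closedBall).nullMeasurableSet)]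
      show volume (T ⁻¹' (Aᶜ ∩ closedBall (w ∘ σ) (r:ℝ))) = _
      rw [hpre]
      have : T ⁻¹' Aᶜ =ᵐ[volume] Aᶜ := by
        rw [Set.preimage_compl]
        exact hAe.compl
      exact measure_congr (this.inter (Filter.EventuallyEq.refl _ _))
    rw [hkey]
    exact h r hr hrq
  have hmatrix : ∀ w : Fin 3 → ℝ, (![w 0, w 1, w 2] : Fin 3 → ℝ) = w := by
    intro w
    funext i
    fin_cases i <;> rfl
  have hsymmg : ∀ (z : Fin 3 → ℝ) (σ : Equiv.Perm (Fin 3)),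
      g (z 0) (z 1) (z 2) = g (z (σ 0)) (z (σ 1)) (z (σ 2)) := by
    intro z σ
    have h1 : (![z (σ 0), z (σ 1), z (σ 2)] : Fin 3 → ℝ) = (![z 0, z 1, z 2] : Fin 3 → ℝ) ∘ σ := by
      funext i
      fin_cases i <;> simp [hmatrix z]
    show (if good ![z 0, z 1, z 2] then (1:ℝ) else 0) =
      (if good ![z (σ 0), z (σ 1), z (σ 2)] then (1:ℝ) else 0)
    rw [h1]
    congr 1
    apply propext
    constructor
    · exact hperm σ _
    · intro hh
      have := hperm σ⁻¹ _ hh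
      have h2 : ((![z 0, z 1, z 2] : Fin 3 → ℝ) ∘ σ) ∘ (σ⁻¹ : Equiv.Perm (Fin 3)) =
          (![z 0, z 1, z 2] : Fin 3 → ℝ) := by
        funext i
        simp [Function.comp]
      rwa [h2] at this
  -- a.e. equality with f
  have haeq : ∀ᵐ z ∂(Measure.pi fun _ : Fin 3 => volume.restrict (Set.Icc (0:ℝ) 1)),
      g (z 0) (z 1) (z 2) = f (z 0) (z 1) (z 2) := by
    rw [pi_restrict_eq 3]
    have hdens := Besicovitch.ae_tendsto_measure_inter_div_of_measurableSet
      (volume : Measure (Fin 3 → ℝ)) hA.compl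
    filter_upwards [ae_restrict_of_ae hdens, ae_restrict_mem hcube] with w hw hwc
    show (if good ![w 0, w 1, w 2] then (1:ℝ) else 0) = f (w 0) (w 1) (w 2)
    rw [hmatrix w]
    by_cases hwA : w ∈ A
    · have hgw : good w := by
        have hind : Aᶜ.indicator (1 : (Fin 3 → ℝ) → ℝ≥0∞) w = 0 :=
          Set.indicator_of_notMem (by simpa using hwA) _
        rw [hind] at hw
        have hev := hw.eventually_lt_const (show (0:ℝ≥0∞) < 1/100 by norm_num)
        obtain ⟨δ, hδ, hsub⟩ := mem_nhdsGT_iff_exists_Ioc_subset.1 hev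
        obtain ⟨q, hq0, hqδ⟩ := exists_rat_btwn (show (0:ℝ) < δ from hδ)
        refine ⟨q, by exact_mod_cast hq0, fun r hr hrq => ?_⟩
        have hr' : (0:ℝ) < r := by exact_mod_cast hr
        have hmem : (r:ℝ) ∈ Ioc (0:ℝ) δ := ⟨hr', hrq.trans hqδ.le⟩
        have hratio := hsub hmem
        simp only [mem_setOf_eq] at hratio
        have hball := hvol w r hr'.le
        have hne0 : ENNReal.ofReal ((2*(r:ℝ))^3) ≠ 0 := by
          rw [ne_eq, ENNReal.ofReal_eq_zero, not_le]
          positivity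
        have hbad : volume (Aᶜ ∩ closedBall w (r:ℝ)) ≤ 1/100 * ENNReal.ofReal ((2*(r:ℝ))^3) := by
          have hh1 : volume (Aᶜ ∩ closedBall w (r:ℝ)) / volume (closedBall w (r:ℝ)) ≤ 1/100 :=
            hratio.le
          rw [hball] at hh1
          exact (ENNReal.div_le_iff_le_mul (Or.inl hne0) (Or.inl ENNReal.ofReal_ne_top)).1 hh1
        calc 100 * volume (Aᶜ ∩ closedBall w (r:ℝ))
            ≤ 100 * (1/100 * ENNReal.ofReal ((2*(r:ℝ))^3)) := by
              exact mul_le_mul_right hbad _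
          _ = ENNReal.ofReal ((2*(r:ℝ))^3) := by
              rw [one_div, ← mul_assoc,
                ENNReal.mul_inv_cancel (by norm_num) (by norm_num), one_mul]
      rw [if_pos hgw]
      exact hwA.2.symm
    · have hng : ¬ good w := by
        intro hgw
        obtain ⟨q, hq, hgood⟩ := hgw
        have hind : Aᶜ.indicator (1 : (Fin 3 → ℝ) → ℝ≥0∞) w = 1 :=
          Set.indicator_of_mem (s := Aᶜ) hwA _
        rw [hind] at hw
        have hev := hw.eventually_const_lt (show (1/2:ℝ≥0∞) < 1 by norm_num)
        obtain ⟨δ, hδ, hsub⟩ := mem_nhdsGT_iff_exists_Ioc_subset.1 hev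
        have hminpos : (0:ℝ) < min δ (q:ℝ) := lt_min hδ (by exact_mod_cast hq)
        obtain ⟨r, hr0, hrm⟩ := exists_rat_btwn hminpos
        have hr' : (0:ℝ) < r := hr0
        have hrq : (r:ℝ) ≤ (q:ℝ) := le_of_lt (lt_of_lt_of_le hrm (min_le_right _ _))
        have hrδ : (r:ℝ) ∈ Ioc (0:ℝ) δ := ⟨hr', le_of_lt (lt_of_lt_of_le hrm (min_le_left _ _))⟩
        have hratio := hsub hrδ
        simp only [mem_setOf_eq] at hratio
        have hball := hvol w r hr'.le
        have hne0 : ENNReal.ofReal ((2*(r:ℝ))^3) ≠ 0 := by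
          rw [ne_eq, ENNReal.ofReal_eq_zero, not_le]
          positivity
        have hr2 : 0 < r := by exact_mod_cast hr'
        have h100 := hgood r hr2 hrq
        -- derive contradiction
        rw [hball] at hratio
        have hlt : 1/2 * ENNReal.ofReal ((2*(r:ℝ))^3) < volume (Aᶜ ∩ closedBall w (r:ℝ)) :=
          (ENNReal.lt_div_iff_mul_lt (Or.inl hne0) (Or.inl ENNReal.ofReal_ne_top)).1 hratio
        have hlt2 : ENNReal.ofReal ((2*(r:ℝ))^3) < 100 * volume (Aᶜ ∩ closedBall w (r:ℝ)) := by
          calc ENNReal.ofReal ((2*(r:ℝ))^3)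
              ≤ 50 * ENNReal.ofReal ((2*(r:ℝ))^3) := by
                nth_rewrite 1 [← one_mul (ENNReal.ofReal ((2*(r:ℝ))^3))]
                exact mul_le_mul_left (by norm_num) _
            _ = 100 * (1/2 * ENNReal.ofReal ((2*(r:ℝ))^3)) := by
                rw [← mul_assoc, one_div,
                  show (100:ℝ≥0∞) = 50 * 2 by norm_num, mul_assoc 50,
                  ENNReal.mul_inv_cancel two_ne_zero ENNReal.ofNat_ne_top, mul_one]
            _ < 100 * volume (Aᶜ ∩ closedBall w (r:ℝ)) := by
                refine ENNReal.mul_lt_mul_right (by norm_num) (by norm_num) hlt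
        exact absurd h100 (not_le.2 hlt2)
      rw [if_neg hng]
      rcases hval (w 0) (w 1) (w 2) with h0 | h1
      · exact h0.symm
      · exact absurd (⟨hwc, h1⟩ : w ∈ A) hwA
  refine ⟨g, hgmeas, hgval, hsymmg, haeq, ?_⟩
  -- no tetrahedra
  intro y hy hinj
  by_contra hne
  have hfac4 : ∀ a b c : Fin 4, g (y a) (y b) (y c) ≠ 0 → good ![y a, y b, y c] := by
    intro a b c h
    by_contra hg
    exact h (if_neg hg)
  have hmul := hne
  have h1 : g (y 0) (y 1) (y 2) ≠ 0 ∧ g (y 0) (y 1) (y 3) ≠ 0 ∧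
      g (y 0) (y 2) (y 3) ≠ 0 ∧ g (y 1) (y 2) (y 3) ≠ 0 := by
    refine ⟨?_, ?_, ?_, ?_⟩ <;> intro h0 <;> apply hne <;> rw [h0] <;> ring
  have hfac : ∀ j : Fin 4, good (y ∘ j.succAbove) := by
    intro j
    fin_cases j
    · show good (y ∘ Fin.succAbove (0 : Fin 4))
      have he : y ∘ Fin.succAbove (0 : Fin 4) = ![y 1, y 2, y 3] := by
        funext i; fin_cases i <;> rfl
      rw [he]; exact hfac4 1 2 3 h1.2.2.2
    · show good (y ∘ Fin.succAbove (1 : Fin 4))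
      have he : y ∘ Fin.succAbove (1 : Fin 4) = ![y 0, y 2, y 3] := by
        funext i; fin_cases i <;> rfl
      rw [he]; exact hfac4 0 2 3 h1.2.2.1
    · show good (y ∘ Fin.succAbove (2 : Fin 4))
      have he : y ∘ Fin.succAbove (2 : Fin 4) = ![y 0, y 1, y 3] := by
        funext i; fin_cases i <;> rfl
      rw [he]; exact hfac4 0 1 3 h1.2.1
    · show good (y ∘ Fin.succAbove (3 : Fin 4))
      have he : y ∘ Fin.succAbove (3 : Fin 4) = ![y 0, y 1, y 2] := by
        funext i; fin_cases i <;> rfl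
      rw [he]; exact hfac4 0 1 2 h1.1
  choose qf hq0 hqf using hfac
  set ε : ℚ := min (min (qf 0) (qf 1)) (min (qf 2) (min (qf 3) 1)) with hε_def
  have hε0 : 0 < ε := by
    simp only [hε_def, lt_min_iff]
    exact ⟨⟨hq0 0, hq0 1⟩, hq0 2, hq0 3, one_pos⟩
  have hε0' : (0:ℝ) < (ε:ℝ) := by exact_mod_cast hε0
  have hε1 : (ε:ℝ) ≤ 1 := by
    have : ε ≤ 1 := le_trans (min_le_right _ _) (le_trans (min_le_right _ _) (min_le_right _ _))
    exact_mod_cast this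
  have hεj : ∀ j : Fin 4, (ε:ℝ) ≤ (qf j : ℝ) := by
    intro j
    have : ε ≤ qf j := by
      fin_cases j
      · exact le_trans (min_le_left _ _) (min_le_left _ _)
      · exact le_trans (min_le_left _ _) (min_le_right _ _)
      · exact le_trans (min_le_right _ _) (min_le_left _ _)
      · exact le_trans (min_le_right _ _) (le_trans (min_le_right _ _) (min_le_left _ _))
    exact_mod_cast this
  have hkey : ∀ j : Fin 4,
      100 * volume (Aᶜ ∩ closedBall (y ∘ j.succAbove) (ε:ℝ)) ≤
        ENNReal.ofReal ((2*(ε:ℝ))^3) :=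
    fun j => hqf j ε hε0 (hεj j)
  set μ4 : Measure (Fin 4 → ℝ) := Measure.pi fun _ : Fin 4 => volume.restrict (Set.Icc (0:ℝ) 1)
    with hμ4_def
  set P : Set (Fin 4 → ℝ) := Set.pi Set.univ fun i => Set.Icc (y i - ε) (y i + ε) with hP_def
  set cube4 : Set (Fin 4 → ℝ) := Set.pi Set.univ fun _ => Set.Icc (0:ℝ) 1 with hcube4_def
  have hcube4 : MeasurableSet cube4 := MeasurableSet.univ_pi fun _ => measurableSet_Icc
  set Dj : Fin 4 → Set (Fin 4 → ℝ) := fun j => P ∩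
    {y' | f (y' (j.succAbove 0)) (y' (j.succAbove 1)) (y' (j.succAbove 2)) = 0} with hDj_def
  have hPsub : ∀ᵐ y' ∂μ4, y' ∈ P → y' ∈ ⋃ j, Dj j := by
    filter_upwards [hae] with y' h0 hyP
    have e30 : ((3:Fin 4).succAbove 0) = 0 := by decide
    have e31 : ((3:Fin 4).succAbove 1) = 1 := by decide
    have e32 : ((3:Fin 4).succAbove 2) = 2 := by decide
    have e20 : ((2:Fin 4).succAbove 0) = 0 := by decide
    have e21 : ((2:Fin 4).succAbove 1) = 1 := by decide
    have e22 : ((2:Fin 4).succAbove 2) = 3 := by decide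
    have e10 : ((1:Fin 4).succAbove 0) = 0 := by decide
    have e11 : ((1:Fin 4).succAbove 1) = 2 := by decide
    have e12 : ((1:Fin 4).succAbove 2) = 3 := by decide
    have e00 : ((0:Fin 4).succAbove 0) = 1 := by decide
    have e01 : ((0:Fin 4).succAbove 1) = 2 := by decide
    have e02 : ((0:Fin 4).succAbove 2) = 3 := by decide
    rcases mul_eq_zero.1 h0 with h | h
    · rcases mul_eq_zero.1 h with h | h
      · rcases mul_eq_zero.1 h with h | h
        · exact mem_iUnion.2 ⟨3, hyP, by simp only [mem_setOf_eq, e30, e31, e32]; exact h⟩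
        · exact mem_iUnion.2 ⟨2, hyP, by simp only [mem_setOf_eq, e20, e21, e22]; exact h⟩
      · exact mem_iUnion.2 ⟨1, hyP, by simp only [mem_setOf_eq, e10, e11, e12]; exact h⟩
    · exact mem_iUnion.2 ⟨0, hyP, by simp only [mem_setOf_eq, e00, e01, e02]; exact h⟩
  have hμP_le : μ4 P ≤ ∑ j : Fin 4, μ4 (Dj j) := by
    calc μ4 P ≤ μ4 (⋃ j, Dj j) := measure_mono_ae hPsub
      _ ≤ ∑ j : Fin 4, μ4 (Dj j) := measure_iUnion_fintype_le _ _
  have hP_lower : ENNReal.ofReal ((ε:ℝ)^4) ≤ μ4 P := by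
    rw [hμ4_def, hP_def, Measure.pi_pi]
    have hfactor : ∀ i : Fin 4, ENNReal.ofReal (ε:ℝ) ≤
        (volume.restrict (Set.Icc (0:ℝ) 1)) (Set.Icc (y i - ε) (y i + ε)) := by
      intro i
      rw [Measure.restrict_apply measurableSet_Icc, Set.Icc_inter_Icc, Real.volume_Icc]
      apply ENNReal.ofReal_le_ofReal
      have hyi := hy i
      rcases le_or_gt (y i + ε) 1 with hc | hc
      · have h1 : min (y i + (ε:ℝ)) 1 = y i + ε := min_eq_left hc
        have h2 : max (y i - (ε:ℝ)) 0 ≤ y i := max_le (by linarith) hyi.1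
        rw [h1]; linarith
      · have h1 : min (y i + (ε:ℝ)) 1 = 1 := min_eq_right hc.le
        have h2 : max (y i - (ε:ℝ)) 0 ≤ 1 - ε := by
          apply max_le
          · linarith [hyi.2]
          · linarith
        rw [h1]; linarith
    calc ENNReal.ofReal ((ε:ℝ)^4) = ∏ _i : Fin 4, ENNReal.ofReal (ε:ℝ) := by
          rw [Finset.prod_const]
          simp [← ENNReal.ofReal_pow hε0'.le]
      _ ≤ _ := Finset.prod_le_prod' fun i _ => hfactor i
  have hD_le : ∀ j : Fin 4, 100 * μ4 (Dj j) ≤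
      ENNReal.ofReal (2*(ε:ℝ)) * ENNReal.ofReal ((2*(ε:ℝ))^3) := by
    intro j
    set S : Set (Fin 3 → ℝ) := Aᶜ ∩ closedBall (y ∘ j.succAbove) (ε:ℝ) with hS_def
    set I : Set ℝ := Set.Icc (y j - ε) (y j + ε) with hI_def
    have hsub : Dj j ∩ cube4 ⊆
        (MeasurableEquiv.piFinSuccAbove (fun _ : Fin 4 => ℝ) j) ⁻¹' (I ×ˢ S) := by
      rintro y' ⟨⟨hyP, hyf⟩, hyc⟩
      have happ : (MeasurableEquiv.piFinSuccAbove (fun _ : Fin 4 => ℝ) j) y' =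
          (y' j, fun i => y' (j.succAbove i)) := rfl
      rw [Set.mem_preimage, happ, Set.mem_prod]
      refine ⟨hyP j (mem_univ j), ?_, ?_⟩
      · intro hmem
        exact one_ne_zero (hmem.2.symm.trans hyf)
      · rw [mem_closedBall, dist_pi_le_iff hε0'.le]
        intro i
        obtain ⟨hl2, hr2⟩ := hyP (j.succAbove i) (mem_univ _)
        show dist (y' (j.succAbove i)) (y (j.succAbove i)) ≤ (ε:ℝ)
        rw [Real.dist_eq, abs_le]
        constructor <;> linarith
    have hμD : μ4 (Dj j) ≤ ENNReal.ofReal (2*(ε:ℝ)) * volume S := by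
      have h1 : μ4 (Dj j) = volume (Dj j ∩ cube4) := by
        rw [hμ4_def, pi_restrict_eq 4, Measure.restrict_apply' hcube4]
      rw [h1]
      have hIS : MeasurableSet (I ×ˢ S) :=
        measurableSet_Icc.prod (hA.compl.inter measurableSet_closedBall)
      calc volume (Dj j ∩ cube4)
          ≤ volume ((MeasurableEquiv.piFinSuccAbove (fun _ : Fin 4 => ℝ) j) ⁻¹' (I ×ˢ S)) :=
            measure_mono hsub
        _ = volume (I ×ˢ S) :=
            (volume_preserving_piFinSuccAbove (fun _ : Fin 4 => ℝ) j).measure_preimage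
              hIS.nullMeasurableSet
        _ = volume I * volume S := by
            rw [Measure.volume_eq_prod, Measure.prod_prod]
        _ = ENNReal.ofReal (2*(ε:ℝ)) * volume S := by
            have harith : (y j + (ε:ℝ)) - (y j - ε) = 2*ε := by ring
            rw [hI_def, Real.volume_Icc, harith]
    calc 100 * μ4 (Dj j) ≤ 100 * (ENNReal.ofReal (2*(ε:ℝ)) * volume S) :=
          mul_le_mul_right hμD _
      _ = ENNReal.ofReal (2*(ε:ℝ)) * (100 * volume S) := by ring
      _ ≤ ENNReal.ofReal (2*(ε:ℝ)) * ENNReal.ofReal ((2*(ε:ℝ))^3) :=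
          mul_le_mul_right (hkey j) _
  -- combine for contradiction
  have hcontr : ENNReal.ofReal (100 * (ε:ℝ)^4) ≤ ENNReal.ofReal (64 * (ε:ℝ)^4) := by
    have hl : ENNReal.ofReal (100 * (ε:ℝ)^4) = 100 * ENNReal.ofReal ((ε:ℝ)^4) := by
      rw [ENNReal.ofReal_mul (by norm_num), ENNReal.ofReal_ofNat]
    have hr : ENNReal.ofReal (64 * (ε:ℝ)^4) =
        4 * (ENNReal.ofReal (2*(ε:ℝ)) * ENNReal.ofReal ((2*(ε:ℝ))^3)) := by
      rw [← ENNReal.ofReal_mul (by positivity),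
        show (4:ℝ≥0∞) = ENNReal.ofReal (4:ℝ) from (ENNReal.ofReal_ofNat 4).symm,
        ← ENNReal.ofReal_mul (by norm_num)]
      congr 1
      ring
    rw [hl, hr]
    calc 100 * ENNReal.ofReal ((ε:ℝ)^4) ≤ 100 * μ4 P := mul_le_mul_right hP_lower _
      _ ≤ 100 * ∑ j : Fin 4, μ4 (Dj j) := mul_le_mul_right hμP_le _
      _ = ∑ j : Fin 4, 100 * μ4 (Dj j) := by rw [Finset.mul_sum]
      _ ≤ ∑ _j : Fin 4, ENNReal.ofReal (2*(ε:ℝ)) * ENNReal.ofReal ((2*(ε:ℝ))^3) :=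
          Finset.sum_le_sum fun j _ => hD_le j
      _ = 4 * (ENNReal.ofReal (2*(ε:ℝ)) * ENNReal.ofReal ((2*(ε:ℝ))^3)) := by
          rw [Finset.sum_const]
          simp [Finset.card_univ]
  rw [ENNReal.ofReal_le_ofReal_iff (by positivity)] at hcontr
  nlinarith [pow_pos hε0' 4]
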